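/- In the field ℚ(A,B,C,D,E,F,G)(x,y) of rational functions, define the mutation sequence z = (A·y² + B·G·y + C·F·G²)/x, u = (E·z + C·D·G)/y, v = (F·u² + B·D·u + A·C·D²)/z, t = (G·v + E·A·D)/u, x' = (C·t² + B·E·t + F·A·E²)/v, y' = (D·x' + G·F·E)/t. Then x' = x and y' = y; i.e., the sequence of cluster variables has period six. -/

import Mathlib

set_option maxHeartbeats 4000000 in
open MvPolynomial in
/-- Hexagon identity for the rank-two `(b,c) = (1,2)` LP algebra of finite type.  In the field
`ℚ(A,B,C,D,E,F,G)(x,y)`, the mutation sequence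
`z = (Ay²+BGy+CFG²)/x`, `u = (Ez+CDG)/y`, `v = (Fu²+BDu+ACD²)/z`, `t = (Gv+EAD)/u`,
`x' = (Ct²+BEt+FAE²)/v`, `y' = (Dx'+GFE)/t` returns to the start: `x' = x` and `y' = y`. -/
theorem stmt7 :
    let f := algebraMap (MvPolynomial (Fin 9) ℚ) (FractionRing (MvPolynomial (Fin 9) ℚ))
    let A := f (X 0)
    let B := f (X 1)
    let C := f (X 2)
    let D := f (X 3)
    let E := f (X 4)
    let F := f (X 5)
    let G := f (X 6)
    let x := f (X 7)
    let y := f (X 8)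
    let z := (A * y ^ 2 + B * G * y + C * F * G ^ 2) / x
    let u := (E * z + C * D * G) / y
    let v := (F * u ^ 2 + B * D * u + A * C * D ^ 2) / z
    let t := (G * v + E * A * D) / u
    let x' := (C * t ^ 2 + B * E * t + F * A * E ^ 2) / v
    let y' := (D * x' + G * F * E) / t
    x' = x ∧ y' = y := by
  intro f A B C D E F G x y z u v t x' y'
  have hinj : Function.Injective f :=
    IsFractionRing.injective (MvPolynomial (Fin 9) ℚ) (FractionRing (MvPolynomial (Fin 9) ℚ))
  have key : ∀ p : MvPolynomial (Fin 9) ℚ,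
      MvPolynomial.eval (fun _ => (1:ℚ)) p ≠ 0 → f p ≠ 0 := by
    intro p hp h0
    apply hp
    have : p = 0 := hinj (by simpa using h0)
    simp [this]
  have hx : x ≠ 0 := key (X 7) (by simp)
  have hy : y ≠ 0 := key (X 8) (by simp)
  -- closed form abbreviations
  set N1 : FractionRing (MvPolynomial (Fin 9) ℚ) :=
    A * y ^ 2 + B * G * y + C * F * G ^ 2 with hN1d
  set N2 : FractionRing (MvPolynomial (Fin 9) ℚ) :=
    E * (A * y ^ 2 + B * G * y + C * F * G ^ 2) + C * D * G * x with hN2d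
  set P3 : FractionRing (MvPolynomial (Fin 9) ℚ) :=
    A * E ^ 2 * F * y ^ 2 + B * D * E * x * y + B * E ^ 2 * F * G * y + C * D ^ 2 * x ^ 2
      + 2 * C * D * E * F * G * x + C * E ^ 2 * F ^ 2 * G ^ 2 with hP3d
  have hN1 : N1 ≠ 0 := by
    have h := key (X 0 * X 8 ^ 2 + X 1 * X 6 * X 8 + X 2 * X 5 * X 6 ^ 2) (by norm_num)
    simp only [map_add, map_mul, map_pow] at h
    rw [hN1d]; exact h
  have hN2 : N2 ≠ 0 := by
    have h := key (X 4 * (X 0 * X 8 ^ 2 + X 1 * X 6 * X 8 + X 2 * X 5 * X 6 ^ 2)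
      + X 2 * X 3 * X 6 * X 7) (by norm_num)
    simp only [map_add, map_mul, map_pow] at h
    rw [hN2d]; exact h
  have hP3 : P3 ≠ 0 := by
    have h := key (X 0 * X 4 ^ 2 * X 5 * X 8 ^ 2 + X 1 * X 3 * X 4 * X 7 * X 8
      + X 1 * X 4 ^ 2 * X 5 * X 6 * X 8 + X 2 * X 3 ^ 2 * X 7 ^ 2
      + 2 * X 2 * X 3 * X 4 * X 5 * X 6 * X 7 + X 2 * X 4 ^ 2 * X 5 ^ 2 * X 6 ^ 2)
      (by norm_num)
    simp only [map_add, map_mul, map_pow, map_ofNat] at h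
    rw [hP3d]; exact h
  have hP4 : D * x + E * F * G ≠ 0 := by
    have h := key (X 3 * X 7 + X 4 * X 5 * X 6) (by norm_num)
    simp only [map_add, map_mul] at h
    exact h
  -- closed forms of the mutation sequence
  have hzf : z = N1 / x := by rw [hN1d]
  have huf : u = N2 / (x * y) := by
    show (E * z + C * D * G) / y = N2 / (x * y)
    rw [hzf, hN2d, hN1d]
    field_simp
  have hvf : v = P3 / (x * y ^ 2) := by
    show (F * u ^ 2 + B * D * u + A * C * D ^ 2) / z = P3 / (x * y ^ 2)
    rw [huf, hzf, hP3d, hN2d, hN1d]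
    have hN1' : A * y ^ 2 + B * G * y + C * F * G ^ 2 ≠ 0 := hN1
    rw [div_eq_div_iff (div_ne_zero hN1' hx) (by positivity)]
    field_simp
    ring
  have htf : t = (D * x + E * F * G) / y := by
    show (G * v + E * A * D) / u = (D * x + E * F * G) / y
    rw [hvf, huf, hP3d, hN2d]
    have hN2' : E * (A * y ^ 2 + B * G * y + C * F * G ^ 2) + C * D * G * x ≠ 0 := hN2
    rw [div_eq_div_iff (div_ne_zero hN2' (mul_ne_zero hx hy)) hy]
    field_simp
    ring
  have hx' : x' = x := by
    show (C * t ^ 2 + B * E * t + F * A * E ^ 2) / v = x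
    rw [htf, hvf, hP3d]
    have hP3' : A * E ^ 2 * F * y ^ 2 + B * D * E * x * y + B * E ^ 2 * F * G * y + C * D ^ 2 * x ^ 2
      + 2 * C * D * E * F * G * x + C * E ^ 2 * F ^ 2 * G ^ 2 ≠ 0 := hP3
    rw [div_eq_iff (div_ne_zero hP3' (by positivity))]
    field_simp
    ring
  refine ⟨hx', ?_⟩
  show (D * x' + G * F * E) / t = y
  rw [hx', htf]
  rw [div_div_eq_mul_div, div_eq_iff hP4]
  ring
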